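/- For all λ, μ ∈ ℂ not both zero, the cubic f = λ·xyz + μ·(x³+y³+z³) has moment matrix m(f) = 0. -/

import Mathlib

open MvPolynomial Matrix

noncomputable section

/-- weight of a monomial exponent: α₁!⋯αₙ!/d! -/
def mwt (d : ℕ) {n : ℕ} (α : Fin n →₀ ℕ) : ℝ :=
  (∏ i, ((α i).factorial : ℝ)) / (d.factorial : ℝ)

/-- the SU(n)-invariant Hermitian product on degree-d forms -/
def herm (d : ℕ) {n : ℕ} (f g : MvPolynomial (Fin n) ℂ) : ℂ :=
  ∑ α ∈ f.support ∪ g.support,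
    (starRingEnd ℂ) (coeff α f) * coeff α g * (mwt d α : ℂ)

/-- H(f)ʲᵢ = (1/(d‖f‖²)) ⟨∂f/∂xⱼ, ∂f/∂xᵢ⟩ -/
def Hmat (n d : ℕ) (f : MvPolynomial (Fin n) ℂ) : Matrix (Fin n) (Fin n) ℂ :=
  fun i j => (1 / (d * herm d f f)) * herm (d - 1) (pderiv j f) (pderiv i f)

/-- moment matrix m(f) = 2(H(f) − (d/n)I) -/
def moment (n d : ℕ) (f : MvPolynomial (Fin n) ℂ) : Matrix (Fin n) (Fin n) ℂ :=
  (2 : ℂ) • (Hmat n d f - ((d : ℂ) / n) • (1 : Matrix (Fin n) (Fin n) ℂ))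

/-- square length ‖m(f)‖² = Re Tr(m(f)·m(f)) -/
def sqLen (n d : ℕ) (f : MvPolynomial (Fin n) ℂ) : ℝ :=
  (Matrix.trace (moment n d f * moment n d f)).re

/-- linear substitution action (A.f)(X) = f(A·X) -/
def act (n : ℕ) (A : Matrix (Fin n) (Fin n) ℂ) (f : MvPolynomial (Fin n) ℂ) :
    MvPolynomial (Fin n) ℂ :=
  aeval (fun i => ∑ j, A i j • X j) f

end

noncomputable section AuxE
open Finsupp

/-- auxiliary exponent vector (a,b,c) as a finsupp on `Fin 3` -/
def eexp (a b c : ℕ) : Fin 3 →₀ ℕ := single 0 a + single 1 b + single 2 c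

@[simp] lemma eexp_apply0 (a b c : ℕ) : (eexp a b c) 0 = a := by
  simp [eexp, Finsupp.single_apply]
@[simp] lemma eexp_apply1 (a b c : ℕ) : (eexp a b c) 1 = b := by
  simp [eexp, Finsupp.single_apply]
@[simp] lemma eexp_apply2 (a b c : ℕ) : (eexp a b c) 2 = c := by
  simp [eexp, Finsupp.single_apply]

lemma eexp_inj {a b c a' b' c' : ℕ} :
    eexp a b c = eexp a' b' c' ↔ a = a' ∧ b = b' ∧ c = c' := by
  constructor
  · intro h
    exact ⟨by simpa using congrArg (fun s : Fin 3 →₀ ℕ => s 0) h,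
           by simpa using congrArg (fun s : Fin 3 →₀ ℕ => s 1) h,
           by simpa using congrArg (fun s : Fin 3 →₀ ℕ => s 2) h⟩
  · rintro ⟨rfl, rfl, rfl⟩; rfl

lemma mwt_eexp (d a b c : ℕ) : mwt d (eexp a b c) =
    (a.factorial * b.factorial * c.factorial : ℝ) / d.factorial := by
  simp [mwt, Fin.prod_univ_three]

lemma eexp_sub (a b c : ℕ) (i : Fin 3) :
    eexp a b c - single i 1 =
      eexp (a - (Finsupp.single i 1 0)) (b - Finsupp.single i 1 1) (c - Finsupp.single i 1 2) := by
  ext j; fin_cases j <;> simp [eexp, Finsupp.single_apply]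

end AuxE

section AuxHerm

lemma herm_eq (d : ℕ) (f g : MvPolynomial (Fin 3) ℂ) (S : Finset (Fin 3 →₀ ℕ))
    (hf : f.support ⊆ S) (hg : g.support ⊆ S) :
    herm d f g = ∑ α ∈ S, (starRingEnd ℂ) (coeff α f) * coeff α g * (mwt d α : ℂ) := by
  refine Finset.sum_subset (Finset.union_subset hf hg) ?_
  intro x _ hx
  simp only [Finset.mem_union, MvPolynomial.mem_support_iff, not_or, not_not] at hx
  simp [hx.1]

lemma herm_add_left (d : ℕ) (f g h : MvPolynomial (Fin 3) ℂ) :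
    herm d (f + g) h = herm d f h + herm d g h := by
  rw [herm_eq d (f+g) h (f.support ∪ g.support ∪ h.support)
        (MvPolynomial.support_add.trans Finset.subset_union_left)
        Finset.subset_union_right,
      herm_eq d f h _ ((Finset.subset_union_left).trans Finset.subset_union_left)
        Finset.subset_union_right,
      herm_eq d g h _ ((Finset.subset_union_right).trans Finset.subset_union_left)
        Finset.subset_union_right,
      ← Finset.sum_add_distrib]
  refine Finset.sum_congr rfl fun α _ => ?_
  simp [coeff_add]; ring

lemma herm_add_right (d : ℕ) (f g h : MvPolynomial (Fin 3) ℂ) :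
    herm d f (g + h) = herm d f g + herm d f h := by
  rw [herm_eq d f (g+h) (f.support ∪ g.support ∪ h.support)
        ((Finset.subset_union_left).trans Finset.subset_union_left)
        (MvPolynomial.support_add.trans (by
          exact Finset.union_subset ((Finset.subset_union_right).trans Finset.subset_union_left)
            Finset.subset_union_right)),
      herm_eq d f g _ ((Finset.subset_union_left).trans Finset.subset_union_left)
        ((Finset.subset_union_right).trans Finset.subset_union_left),
      herm_eq d f h _ ((Finset.subset_union_left).trans Finset.subset_union_left)
        Finset.subset_union_right,
      ← Finset.sum_add_distrib]
  refine Finset.sum_congr rfl fun α _ => ?_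
  simp [coeff_add]; ring

lemma herm_monomial (d : ℕ) (s t : Fin 3 →₀ ℕ) (a b : ℂ) :
    herm d (monomial s a) (monomial t b) =
      if s = t then (starRingEnd ℂ) a * b * (mwt d s : ℂ) else 0 := by
  by_cases hst : s = t
  · subst hst
    rw [herm_eq d _ _ {s} (by rw [support_monomial]; split <;> simp)
        (by rw [support_monomial]; split <;> simp), Finset.sum_singleton]
    simp [coeff_monomial]
  · rw [herm_eq d _ _ {s, t} (by rw [support_monomial]; split <;> simp)
        (by rw [support_monomial]; split <;> simp),
      Finset.sum_insert (by simpa using hst), Finset.sum_singleton]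
    simp [coeff_monomial, hst, Ne.symm hst]

end AuxHerm

/-- For all λ, μ ∈ ℂ not both zero, λ·xyz + μ·(x³+y³+z³) has moment matrix 0. -/
theorem stmt8 (l m : ℂ) (h : ¬(l = 0 ∧ m = 0)) :
    moment 3 3 (C l * (X 0 * X 1 * X 2) +
      C m * ((X 0)^3 + (X 1)^3 + (X 2)^3) : MvPolynomial (Fin 3) ℂ) = 0 := by
  set f : MvPolynomial (Fin 3) ℂ := C l * (X 0 * X 1 * X 2) +
      C m * ((X 0)^3 + (X 1)^3 + (X 2)^3) with hfdef
  -- monomial decomposition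
  have hf : f = monomial (eexp 1 1 1) l +
      (monomial (eexp 3 0 0) m + monomial (eexp 0 3 0) m + monomial (eexp 0 0 3) m) := by
    have h1 : (X 0 * X 1 * X 2 : MvPolynomial (Fin 3) ℂ) = monomial (eexp 1 1 1) 1 := by
      simp [eexp, X, monomial_mul]
    have h2 : ∀ i : Fin 3, (X i ^ 3 : MvPolynomial (Fin 3) ℂ) =
        monomial (Finsupp.single i 3) 1 := fun i => by rw [X_pow_eq_monomial]
    have e300 : Finsupp.single (0 : Fin 3) 3 = eexp 3 0 0 := by simp [eexp]
    have e030 : Finsupp.single (1 : Fin 3) 3 = eexp 0 3 0 := by simp [eexp]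
    have e003 : Finsupp.single (2 : Fin 3) 3 = eexp 0 0 3 := by simp [eexp]
    rw [hfdef, h1, h2 0, h2 1, h2 2, e300, e030, e003]
    simp [C_mul_monomial, mul_add]
  -- derivatives
  have hd0 : pderiv 0 f = monomial (eexp 0 1 1) l + monomial (eexp 2 0 0) (3*m) := by
    rw [hf]; simp [pderiv_monomial, eexp_sub, Finsupp.single_apply, mul_comm]
  have hd1 : pderiv 1 f = monomial (eexp 1 0 1) l + monomial (eexp 0 2 0) (3*m) := by
    rw [hf]; simp [pderiv_monomial, eexp_sub, Finsupp.single_apply, mul_comm]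
  have hd2 : pderiv 2 f = monomial (eexp 1 1 0) l + monomial (eexp 0 0 2) (3*m) := by
    rw [hf]; simp [pderiv_monomial, eexp_sub, Finsupp.single_apply, mul_comm]
  -- norm of f
  have h3 : herm 3 f f = (((Complex.normSq l / 6 + 3 * Complex.normSq m : ℝ)) : ℂ) := by
    rw [hf]
    simp [herm_add_left, herm_add_right, herm_monomial, eexp_inj, mwt_eexp,
      Nat.factorial]
    rw [Complex.normSq_eq_conj_mul_self, Complex.normSq_eq_conj_mul_self]
    ring
  have hne : herm 3 f f ≠ 0 := by
    rw [h3]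
    norm_cast
    intro hz
    have hl : Complex.normSq l = 0 := by nlinarith [Complex.normSq_nonneg l, Complex.normSq_nonneg m]
    have hm : Complex.normSq m = 0 := by nlinarith [Complex.normSq_nonneg l, Complex.normSq_nonneg m]
    exact h ⟨Complex.normSq_eq_zero.mp hl, Complex.normSq_eq_zero.mp hm⟩
  have tri : ∀ i : Fin 3, i = 0 ∨ i = 1 ∨ i = 2 := by decide
  -- diagonal entries
  have hdiag : ∀ i : Fin 3, herm 2 (pderiv i f) (pderiv i f) = 3 * herm 3 f f := by
    intro i
    rcases tri i with rfl | rfl | rfl <;>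
      [rw [hd0, h3]; rw [hd1, h3]; rw [hd2, h3]] <;>
    · simp [herm_add_left, herm_add_right, herm_monomial, eexp_inj, mwt_eexp, Nat.factorial, map_ofNat]
      rw [Complex.normSq_eq_conj_mul_self, Complex.normSq_eq_conj_mul_self]
      ring
  -- off-diagonal entries
  have hoff : ∀ i j : Fin 3, i ≠ j → herm 2 (pderiv j f) (pderiv i f) = 0 := by
    intro i j hij
    rcases tri i with rfl | rfl | rfl <;> rcases tri j with rfl | rfl | rfl <;>
      first
      | exact absurd rfl hij
      | (simp only [hd0, hd1, hd2]
         simp [herm_add_left, herm_add_right, herm_monomial, eexp_inj])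
  -- assemble
  have hH : Hmat 3 3 f = 1 := by
    funext i j
    by_cases hij : i = j
    · subst hij
      simp only [Hmat, Matrix.one_apply_eq]
      rw [show (3 : ℕ) - 1 = 2 from rfl, hdiag i]
      field_simp
      norm_num

    · simp only [Hmat, Matrix.one_apply_ne hij]
      rw [show (3 : ℕ) - 1 = 2 from rfl, hoff i j hij, mul_zero]
  rw [moment, hH]
  norm_num
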